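/- If 0 ∈ K_N, then the unique solution (u_N, p_M) ∈ K_N × W of the discrete Biot contact problem satisfies (‖u_N‖_H² + ‖p_M‖_Q²)^{1/2} ≤ ‖f_e‖_H + ‖f_f‖_Q. -/
import Mathlib


open scoped RealInnerProductSpace

/-- Stability estimate for the solution of the discrete Biot contact problem
when `0 ∈ K_N`. -/
theorem stmt_10 {H Q : Type*}
    [NormedAddCommGroup H] [InnerProductSpace ℝ H] [CompleteSpace H]
    [NormedAddCommGroup Q] [InnerProductSpace ℝ Q] [CompleteSpace Q]
    (B : H →L[ℝ] Q) (hB : ‖B‖ ≤ 1)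
    (V_N : Submodule ℝ H) (hVN : FiniteDimensional ℝ V_N)
    (K_N : Set H) (hKN_sub : K_N ⊆ (V_N : Set H))
    (hKN0 : (0 : H) ∈ K_N) (hKN_cl : IsClosed K_N) (hKN_cv : Convex ℝ K_N)
    (W : Submodule ℝ Q) (hW : FiniteDimensional ℝ W)
    (f_e : H) (f_f : Q) (u_N : H) (p_M : Q)
    (hu : u_N ∈ K_N) (hp : p_M ∈ W)
    (hVI : ∀ v_N ∈ K_N, ⟪u_N, v_N - u_N⟫ - ⟪p_M, B (v_N - u_N)⟫ ≥ ⟪f_e, v_N - u_N⟫)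
    (hEq : ∀ q ∈ W, -⟪B u_N, q⟫ - ⟪p_M, q⟫ = ⟪f_f, q⟫) :
    Real.sqrt (‖u_N‖ ^ 2 + ‖p_M‖ ^ 2) ≤ ‖f_e‖ + ‖f_f‖ := by
  set S := Real.sqrt (‖u_N‖ ^ 2 + ‖p_M‖ ^ 2) with hS
  have hsum_nonneg : (0:ℝ) ≤ ‖u_N‖ ^ 2 + ‖p_M‖ ^ 2 := by positivity
  have h1 := hVI 0 hKN0
  have h2 := hEq p_M hp
  simp only [zero_sub, map_neg, inner_neg_neg, inner_neg_right] at h1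
  have hself : ⟪u_N, u_N⟫ = ‖u_N‖ ^ 2 := real_inner_self_eq_norm_sq u_N
  have hpself : ⟪p_M, p_M⟫ = ‖p_M‖ ^ 2 := real_inner_self_eq_norm_sq p_M
  have key : ‖u_N‖ ^ 2 + ‖p_M‖ ^ 2 ≤ ⟪f_e, u_N⟫ - ⟪f_f, p_M⟫ := by
    have hc : ⟪B u_N, p_M⟫ = ⟪p_M, B u_N⟫ := real_inner_comm _ _
    nlinarith [h1, h2, hself, hpself, hc]
  have hcs1 : ⟪f_e, u_N⟫ ≤ ‖f_e‖ * ‖u_N‖ := real_inner_le_norm _ _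
  have hcs2 : -⟪f_f, p_M⟫ ≤ ‖f_f‖ * ‖p_M‖ := by
    have := real_inner_le_norm f_f (-p_M)
    simpa using this
  have huS : ‖u_N‖ ≤ S := by
    rw [hS]
    conv_lhs => rw [← Real.sqrt_sq (norm_nonneg u_N)]
    exact Real.sqrt_le_sqrt (by nlinarith [sq_nonneg ‖p_M‖])
  have hpS : ‖p_M‖ ≤ S := by
    rw [hS]
    conv_lhs => rw [← Real.sqrt_sq (norm_nonneg p_M)]
    exact Real.sqrt_le_sqrt (by nlinarith [sq_nonneg ‖u_N‖])
  have hS2 : S ^ 2 = ‖u_N‖ ^ 2 + ‖p_M‖ ^ 2 := Real.sq_sqrt hsum_nonneg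
  have hSnn : 0 ≤ S := Real.sqrt_nonneg _
  have hbound : S ^ 2 ≤ (‖f_e‖ + ‖f_f‖) * S := by
    calc S ^ 2 = ‖u_N‖ ^ 2 + ‖p_M‖ ^ 2 := hS2
    _ ≤ ⟪f_e, u_N⟫ - ⟪f_f, p_M⟫ := key
    _ ≤ ‖f_e‖ * ‖u_N‖ + ‖f_f‖ * ‖p_M‖ := by linarith
    _ ≤ ‖f_e‖ * S + ‖f_f‖ * S := by
        have := norm_nonneg f_e; have := norm_nonneg f_f
        nlinarith [huS, hpS]
    _ = (‖f_e‖ + ‖f_f‖) * S := by ring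
  rcases eq_or_lt_of_le hSnn with h0 | h0
  · rw [← h0]; positivity
  · nlinarith
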